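/- Let r₀, r₂, r₃ ∈ (−1, 1) be real numbers, x₀ = 2, x₁ = 3, and let C⁰, C¹, C² be the rotation coins C⁰ = [[√(1−r₀²), r₀], [−r₀, √(1−r₀²)]], C¹ = [[√(1−r₂²), r₂], [−r₂, √(1−r₂²)]], C² = [[√(1−r₃²), r₃], [−r₃, √(1−r₃²)]]. Define 𝚋(z) = C²₂₁ z^{x₁} + C¹₂₁ (det C²) z^{2x₀−x₁} − C⁰₂₁C¹₁₂C²₂₁ z^{x₁−2x₀} + C⁰₂₁ (det C¹)(det C²) z^{−x₁}. Then 𝚋(i) = i·(r₃ − r₂ + r₀r₂r₃ − r₀), and 𝚋(i) = 0 if and only if r₂ = (r₃ − r₀)/(1 − r₀r₃). (Note 1 − r₀r₃ > 0.) -/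

import Mathlib

open Matrix

set_option maxRecDepth 4000 in
lemma det_rot (r : ℝ) (h : r ∈ Set.Ioo (-1 : ℝ) 1) :
    (!![(Real.sqrt (1 - r ^ 2) : ℂ), (r : ℂ); -(r : ℂ), (Real.sqrt (1 - r ^ 2) : ℂ)]).det = 1 := by
  have hnn : (0:ℝ) ≤ 1 - r ^ 2 := by nlinarith [h.1, h.2]
  have hs : (Real.sqrt (1 - r ^ 2) : ℝ) * Real.sqrt (1 - r ^ 2) = 1 - r ^ 2 :=
    Real.mul_self_sqrt hnn
  rw [Matrix.det_fin_two_of, mul_neg, sub_neg_eq_add, ← Complex.ofReal_mul, hs]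
  push_cast
  ring

/-- Resonant tunneling for the non-symmetric triple barrier with rotation coins at sites
`0, 2, 3`: the reflection amplitude at `z = i` equals `i(r₃ - r₂ + r₀r₂r₃ - r₀)`, which
vanishes iff `r₂ = (r₃ - r₀)/(1 - r₀r₃)`; moreover `1 - r₀r₃ > 0`. -/
theorem stmt11 (r₀ r₂ r₃ : ℝ) (h₀ : r₀ ∈ Set.Ioo (-1 : ℝ) 1) (h₂ : r₂ ∈ Set.Ioo (-1 : ℝ) 1)
    (h₃ : r₃ ∈ Set.Ioo (-1 : ℝ) 1) :
    let C0 : Matrix (Fin 2) (Fin 2) ℂ :=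
      !![(Real.sqrt (1 - r₀ ^ 2) : ℂ), (r₀ : ℂ); -(r₀ : ℂ), (Real.sqrt (1 - r₀ ^ 2) : ℂ)]
    let C1 : Matrix (Fin 2) (Fin 2) ℂ :=
      !![(Real.sqrt (1 - r₂ ^ 2) : ℂ), (r₂ : ℂ); -(r₂ : ℂ), (Real.sqrt (1 - r₂ ^ 2) : ℂ)]
    let C2 : Matrix (Fin 2) (Fin 2) ℂ :=
      !![(Real.sqrt (1 - r₃ ^ 2) : ℂ), (r₃ : ℂ); -(r₃ : ℂ), (Real.sqrt (1 - r₃ ^ 2) : ℂ)]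
    let x₀ : ℤ := 2
    let x₁ : ℤ := 3
    let b : ℂ := C2 1 0 * Complex.I ^ x₁ + C1 1 0 * C2.det * Complex.I ^ (2 * x₀ - x₁)
      - C0 1 0 * C1 0 1 * C2 1 0 * Complex.I ^ (x₁ - 2 * x₀)
      + C0 1 0 * C1.det * C2.det * Complex.I ^ (-x₁)
    b = Complex.I * ((r₃ : ℂ) - (r₂ : ℂ) + (r₀ : ℂ) * (r₂ : ℂ) * (r₃ : ℂ) - (r₀ : ℂ))
      ∧ (b = 0 ↔ r₂ = (r₃ - r₀) / (1 - r₀ * r₃))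
      ∧ 0 < 1 - r₀ * r₃ := by
  intro C0 C1 C2 x₀ x₁ b
  have hpos : 0 < 1 - r₀ * r₃ := by nlinarith [h₀.1, h₀.2, h₃.1, h₃.2]
  have hI3 : Complex.I ^ (3 : ℤ) = -Complex.I := by
    norm_num [zpow_ofNat, pow_succ, Complex.I_sq]
  have hI1 : Complex.I ^ (1 : ℤ) = Complex.I := zpow_one _
  have hIm1 : Complex.I ^ (-1 : ℤ) = -Complex.I := by
    rw [_root_.zpow_neg, zpow_one, Complex.inv_I]
  have hIm3 : Complex.I ^ (-3 : ℤ) = Complex.I := by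
    rw [_root_.zpow_neg, hI3]
    rw [inv_neg, Complex.inv_I, neg_neg]
  have hb : b = Complex.I * ((r₃ : ℂ) - (r₂ : ℂ) + (r₀ : ℂ) * (r₂ : ℂ) * (r₃ : ℂ) - (r₀ : ℂ)) := by
    show C2 1 0 * Complex.I ^ (3 : ℤ) + C1 1 0 * C2.det * Complex.I ^ (1 : ℤ)
      - C0 1 0 * C1 0 1 * C2 1 0 * Complex.I ^ (-1 : ℤ)
      + C0 1 0 * C1.det * C2.det * Complex.I ^ (-3 : ℤ) = _
    rw [hI3, hI1, hIm1, hIm3, det_rot r₂ h₂, det_rot r₃ h₃]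
    show -(r₃:ℂ) * (-Complex.I) + -(r₂:ℂ) * 1 * Complex.I
      - -(r₀:ℂ) * (r₂:ℂ) * (-(r₃:ℂ)) * (-Complex.I)
      + -(r₀:ℂ) * 1 * 1 * Complex.I = _
    ring
  refine ⟨hb, ?_, hpos⟩
  rw [hb]
  constructor
  · intro h
    have h' : (r₃ : ℂ) - r₂ + r₀ * r₂ * r₃ - r₀ = 0 := by
      rcases mul_eq_zero.mp h with h | h
      · exact absurd h Complex.I_ne_zero
      · exact h
    have hr : r₃ - r₂ + r₀ * r₂ * r₃ - r₀ = 0 := by exact_mod_cast h'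
    rw [eq_div_iff (ne_of_gt hpos)]
    linarith [hr]
  · intro h
    have hne : 1 - r₀ * r₃ ≠ 0 := ne_of_gt hpos
    have : r₂ * (1 - r₀ * r₃) = r₃ - r₀ := by
      rw [h, div_mul_eq_mul_div, mul_div_assoc, div_self hne, mul_one]
    have hr : r₃ - r₂ + r₀ * r₂ * r₃ - r₀ = 0 := by nlinarith [this]
    rw [show ((r₃ : ℂ) - r₂ + r₀ * r₂ * r₃ - r₀) = ((r₃ - r₂ + r₀ * r₂ * r₃ - r₀ : ℝ) : ℂ) by push_cast; ring, hr]
    simp
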